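/- Let x and y be independent standard Gaussian random vectors in ℝ^d with d ≥ 1, and let ε > 0. Then the probability that their cosine similarity is at most ε in absolute value satisfies P[ |⟨x/‖x‖, y/‖y‖⟩| ≤ ε ] ≥ 1 − 2/(√d·ε) − 7/√d. (In particular, two independent standard Gaussian vectors in high dimension are nearly orthogonal with high probability.) -/

import Mathlib

open MeasureTheory ProbabilityTheory

section Stmt16AuxSection
open Real Filter Fintype
open scoped NNReal ENNReal Real

namespace Stmt16Aux

theorem integrable_pi_prod {n : ℕ} (μ : Measure ℝ) [IsProbabilityMeasure μ] {f : Fin n → ℝ → ℝ}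
    (hf : ∀ i, Integrable (f i) μ) :
    Integrable (fun x : Fin n → ℝ => ∏ i, f i (x i)) (Measure.pi fun _ => μ) := by
  induction n with
  | zero => simp only [Finset.univ_eq_empty, Finset.prod_empty]
            exact integrable_const _
  | succ n n_ih =>
      have := ((measurePreserving_piFinSuccAbove (fun _ : Fin (n+1) => μ) 0).symm)
      rw [← this.integrable_comp_emb (MeasurableEquiv.measurableEmbedding _)]
      simp_rw [MeasurableEquiv.piFinSuccAbove_symm_apply, Fin.insertNthEquiv,
        Fin.prod_univ_succ, Fin.insertNth_zero]
      simp only [Fin.zero_succAbove, Function.comp_def, Fin.cons_zero, Fin.cons_succ,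
        Equiv.coe_fn_mk]
      exact Integrable.mul_prod (hf 0) (n_ih (fun i ↦ hf _))

theorem integral_pi_prod {n : ℕ} (μ : Measure ℝ) [IsProbabilityMeasure μ] (f : Fin n → ℝ → ℝ) :
    ∫ x : Fin n → ℝ, ∏ i, f i (x i) ∂(Measure.pi fun _ => μ) = ∏ i, ∫ t, f i t ∂μ := by
  induction n with
  | zero => simp
  | succ n n_ih =>
      calc
        _ = ∫ x : ℝ × (Fin n → ℝ),
            f 0 x.1 * ∏ i : Fin n, f i.succ (x.2 i) ∂(μ.prod (Measure.pi fun _ => μ)) := by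
          rw [← ((measurePreserving_piFinSuccAbove (fun _ : Fin (n+1) => μ) 0).symm).integral_comp']
          congr 1
          ext x
          simp [MeasurableEquiv.piFinSuccAbove_symm_apply, Fin.insertNthEquiv,
            Fin.prod_univ_succ, Fin.insertNth_zero, Fin.zero_succAbove]
        _ = (∫ t, f 0 t ∂μ) *
            ∫ y : Fin n → ℝ, ∏ i : Fin n, f i.succ (y i) ∂(Measure.pi fun _ => μ) :=
          integral_prod_mul (f 0) (fun y : Fin n → ℝ => ∏ i : Fin n, f i.succ (y i))
        _ = (∫ t, f 0 t ∂μ) * ∏ i : Fin n, ∫ t, f i.succ t ∂μ := by rw [n_ih]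
        _ = ∏ i, ∫ t, f i t ∂μ := by rw [Fin.prod_univ_succ]

end Stmt16Aux

namespace Stmt16Aux

noncomputable def gpdf : ℝ → ℝ≥0 := fun x => (gaussianPDFReal 0 1 x).toNNReal

lemma gpdf_meas : Measurable gpdf := (measurable_gaussianPDFReal 0 1).real_toNNReal

lemma gaussian_eq : gaussianReal 0 1 = volume.withDensity (fun x => (gpdf x : ℝ≥0∞)) := by
  rw [gaussianReal_of_var_ne_zero 0 one_ne_zero]
  rfl

lemma integral_gauss (f : ℝ → ℝ) :
    ∫ x, f x ∂(gaussianReal 0 1) = ∫ x, gaussianPDFReal 0 1 x * f x := by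
  rw [gaussian_eq, integral_withDensity_eq_integral_smul gpdf_meas]
  congr 1 with x
  simp [gpdf, NNReal.smul_def, Real.coe_toNNReal _ (gaussianPDFReal_nonneg 0 1 x)]

lemma integrable_gauss_iff (f : ℝ → ℝ) (hf : Measurable f) :
    Integrable f (gaussianReal 0 1) ↔ Integrable (fun x => gaussianPDFReal 0 1 x * f x) := by
  rw [gaussian_eq, integrable_withDensity_iff_integrable_smul gpdf_meas]
  constructor <;> intro h <;> [skip; skip] <;>
  · apply h.congr
    filter_upwards with x
    simp [gpdf, NNReal.smul_def, Real.coe_toNNReal _ (gaussianPDFReal_nonneg 0 1 x)]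

lemma gaussianPDFReal_zero_one (x : ℝ) :
    gaussianPDFReal 0 1 x = (Real.sqrt (2 * π))⁻¹ * rexp (-(2⁻¹ : ℝ) * x ^ 2) := by
  simp only [gaussianPDFReal, mul_one, sub_zero, NNReal.coe_one]
  ring_nf

lemma integrable_pow_exp (n : ℕ) :
    Integrable (fun x : ℝ => x ^ n * rexp (-(2⁻¹ : ℝ) * x ^ 2)) := by
  have := integrable_rpow_mul_exp_neg_mul_sq (b := (2⁻¹ : ℝ)) (by norm_num) (s := n)
    (by exact_mod_cast (neg_one_lt_zero.trans_le (Nat.cast_nonneg n)))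
  simpa [Real.rpow_natCast] using this

lemma integrable_pow_gauss (n : ℕ) :
    Integrable (fun x : ℝ => x ^ n) (gaussianReal 0 1) := by
  rw [integrable_gauss_iff _ (measurable_id'.pow_const n)]
  have h : (fun x : ℝ => gaussianPDFReal 0 1 x * x ^ n)
      = fun x : ℝ => (Real.sqrt (2 * π))⁻¹ * (x ^ n * rexp (-(2⁻¹ : ℝ) * x ^ 2)) := by
    funext x; rw [gaussianPDFReal_zero_one]; ring
  rw [h]
  exact (integrable_pow_exp n).const_mul _

lemma hasDerivAt_negexp (x : ℝ) :
    HasDerivAt (fun x : ℝ => -rexp (-(2⁻¹ : ℝ) * x ^ 2)) (x * rexp (-(2⁻¹ : ℝ) * x ^ 2)) x := by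
  have h1 : HasDerivAt (fun x : ℝ => -(2⁻¹ : ℝ) * x ^ 2) (-(2⁻¹ : ℝ) * (2 * x ^ 1)) x :=
    (hasDerivAt_pow 2 x).const_mul _
  have := (h1.exp).fun_neg
  rw [show x * rexp (-(2⁻¹ : ℝ) * x ^ 2)
      = -(rexp (-(2⁻¹ : ℝ) * x ^ 2) * (-(2⁻¹ : ℝ) * (2 * x ^ 1))) by ring]
  exact this

lemma parts (m : ℕ) :
    ∫ x : ℝ, x ^ (m + 2) * rexp (-(2⁻¹ : ℝ) * x ^ 2)
      = (m + 1 : ℝ) * ∫ x : ℝ, x ^ m * rexp (-(2⁻¹ : ℝ) * x ^ 2) := by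
  have hu : ∀ x : ℝ, HasDerivAt (fun x : ℝ => x ^ (m + 1))
      ((m + 1 : ℝ) * x ^ m) x := by
    intro x
    simpa using hasDerivAt_pow (m + 1) x
  have h1 : ∫ x : ℝ, (fun x : ℝ => x ^ (m+1)) x * (x * rexp (-(2⁻¹ : ℝ) * x ^ 2))
      = - ∫ x : ℝ, ((m + 1 : ℝ) * x ^ m) * (-rexp (-(2⁻¹ : ℝ) * x ^ 2)) := by
    apply integral_mul_deriv_eq_deriv_mul_of_integrable (fun x _ => hu x) (fun x _ => hasDerivAt_negexp x)
    · have h : (fun x : ℝ => x ^ (m+1)) * (fun x : ℝ => x * rexp (-(2⁻¹ : ℝ) * x ^ 2))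
          = fun x : ℝ => x ^ (m + 2) * rexp (-(2⁻¹ : ℝ) * x ^ 2) := by
        funext x; simp [Pi.mul_apply]; ring
      rw [h]; exact integrable_pow_exp (m + 2)
    · have h : (fun x : ℝ => (m + 1 : ℝ) * x ^ m) * (fun x : ℝ => -rexp (-(2⁻¹ : ℝ) * x ^ 2))
          = fun x : ℝ => -((m + 1 : ℝ) * (x ^ m * rexp (-(2⁻¹ : ℝ) * x ^ 2))) := by
        funext x; simp [Pi.mul_apply]; ring
      rw [h]; exact (((integrable_pow_exp m).const_mul _).neg)
    · have h : (fun x : ℝ => x ^ (m+1)) * (fun x : ℝ => -rexp (-(2⁻¹ : ℝ) * x ^ 2))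
          = fun x : ℝ => -(x ^ (m+1) * rexp (-(2⁻¹ : ℝ) * x ^ 2)) := by
        funext x; simp [Pi.mul_apply]
      rw [h]; exact (integrable_pow_exp (m+1)).neg
  have h2 : (fun x : ℝ => x ^ (m+1) * (x * rexp (-(2⁻¹ : ℝ) * x ^ 2)))
      = fun x : ℝ => x ^ (m + 2) * rexp (-(2⁻¹ : ℝ) * x ^ 2) := by
    funext x; ring
  rw [h2] at h1
  rw [h1, ← integral_neg]
  rw [show (fun x : ℝ => -(((m + 1 : ℝ) * x ^ m) * (-rexp (-(2⁻¹ : ℝ) * x ^ 2))))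
      = fun x : ℝ => (m + 1 : ℝ) * (x ^ m * rexp (-(2⁻¹ : ℝ) * x ^ 2)) from by funext x; ring,
    integral_const_mul]

lemma G0 : ∫ x : ℝ, x ^ 0 * rexp (-(2⁻¹ : ℝ) * x ^ 2) = Real.sqrt (2 * π) := by
  simp only [pow_zero, one_mul]
  rw [integral_gaussian]
  rw [show π / (2⁻¹ : ℝ) = 2 * π by ring]

lemma G1 : ∫ x : ℝ, x ^ 1 * rexp (-(2⁻¹ : ℝ) * x ^ 2) = 0 := by
  have hu : ∀ x : ℝ, HasDerivAt (fun _ : ℝ => (1 : ℝ)) 0 x := fun x => hasDerivAt_const x 1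
  have h1 : ∫ x : ℝ, (1 : ℝ) * (x * rexp (-(2⁻¹ : ℝ) * x ^ 2))
      = - ∫ x : ℝ, (0 : ℝ) * (-rexp (-(2⁻¹ : ℝ) * x ^ 2)) := by
    apply integral_mul_deriv_eq_deriv_mul_of_integrable (fun x _ => hu x) (fun x _ => hasDerivAt_negexp x)
    · have h : (fun _ : ℝ => (1:ℝ)) * (fun x : ℝ => x * rexp (-(2⁻¹ : ℝ) * x ^ 2))
          = fun x : ℝ => x ^ 1 * rexp (-(2⁻¹ : ℝ) * x ^ 2) := by
        funext x; simp [Pi.mul_apply]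
      rw [h]; exact integrable_pow_exp 1
    · have h : (fun x : ℝ => (0:ℝ)) * (fun x : ℝ => -rexp (-(2⁻¹ : ℝ) * x ^ 2))
          = fun _ : ℝ => (0:ℝ) := by funext x; simp [Pi.mul_apply]
      rw [h]; exact integrable_zero ℝ ℝ (volume : Measure ℝ)
    · have h : (fun _ : ℝ => (1:ℝ)) * (fun x : ℝ => -rexp (-(2⁻¹ : ℝ) * x ^ 2))
          = fun x : ℝ => -(x ^ 0 * rexp (-(2⁻¹ : ℝ) * x ^ 2)) := by
        funext x; simp [Pi.mul_apply]
      rw [h]; exact (integrable_pow_exp 0).neg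
  simpa using h1

lemma G2 : ∫ x : ℝ, x ^ 2 * rexp (-(2⁻¹ : ℝ) * x ^ 2) = Real.sqrt (2 * π) := by
  have := parts 0
  rw [G0] at this
  simpa using this

lemma G4 : ∫ x : ℝ, x ^ 4 * rexp (-(2⁻¹ : ℝ) * x ^ 2) = 3 * Real.sqrt (2 * π) := by
  have h := parts 2
  rw [G2] at h
  norm_num at h ⊢
  rw [h]

lemma sqrt2pi_pos : 0 < Real.sqrt (2 * π) := Real.sqrt_pos.mpr (by positivity)

lemma mom (n : ℕ) : ∫ x, x ^ n ∂(gaussianReal 0 1)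
    = (Real.sqrt (2 * π))⁻¹ * ∫ x : ℝ, x ^ n * rexp (-(2⁻¹ : ℝ) * x ^ 2) := by
  rw [integral_gauss]
  rw [show (fun x : ℝ => gaussianPDFReal 0 1 x * x ^ n)
      = fun x : ℝ => (Real.sqrt (2 * π))⁻¹ * (x ^ n * rexp (-(2⁻¹ : ℝ) * x ^ 2)) from by
    funext x; rw [gaussianPDFReal_zero_one]; ring]
  rw [integral_const_mul]

lemma mom1 : ∫ x, x ∂(gaussianReal 0 1) = 0 := by
  have := mom 1
  rw [G1] at this
  simpa using this

lemma mom2 : ∫ x, x ^ 2 ∂(gaussianReal 0 1) = 1 := by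
  rw [mom 2, G2, inv_mul_cancel₀ sqrt2pi_pos.ne']

lemma mom4 : ∫ x, x ^ 4 ∂(gaussianReal 0 1) = 3 := by
  rw [mom 4, G4, ← mul_assoc, mul_comm _ (3:ℝ), mul_assoc, inv_mul_cancel₀ sqrt2pi_pos.ne']
  ring

lemma int_sq_sub_one : ∫ x, (x ^ 2 - 1) ∂(gaussianReal 0 1) = 0 := by
  rw [integral_sub (integrable_pow_gauss 2) (integrable_const 1)]
  simp [mom2]

lemma integrable_sq_sub_one : Integrable (fun x : ℝ => x ^ 2 - 1) (gaussianReal 0 1) :=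
  (integrable_pow_gauss 2).sub (integrable_const 1)

lemma integrable_sq_sub_one_sq : Integrable (fun x : ℝ => (x ^ 2 - 1) ^ 2) (gaussianReal 0 1) := by
  have h : (fun x : ℝ => (x ^ 2 - 1) ^ 2) = fun x : ℝ => x ^ 4 - 2 * x ^ 2 + 1 := by
    funext x; ring
  rw [h]
  exact ((integrable_pow_gauss 4).sub ((integrable_pow_gauss 2).const_mul 2)).add
    (integrable_const 1)

lemma int_sq_sub_one_sq : ∫ x, (x ^ 2 - 1) ^ 2 ∂(gaussianReal 0 1) = 2 := by
  have h : (fun x : ℝ => (x ^ 2 - 1) ^ 2) = fun x : ℝ => x ^ 4 - 2 * x ^ 2 + 1 := by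
    funext x; ring
  have ha : Integrable (fun x : ℝ => x ^ 4 - 2 * x ^ 2) (gaussianReal 0 1) :=
    (integrable_pow_gauss 4).sub ((integrable_pow_gauss 2).const_mul 2)
  rw [h]
  rw [show (fun x : ℝ => x ^ 4 - 2 * x ^ 2 + 1)
      = (fun x : ℝ => (x ^ 4 - 2 * x ^ 2) + 1) from rfl]
  rw [integral_add ha (integrable_const 1),
    integral_sub (integrable_pow_gauss 4) ((integrable_pow_gauss 2).const_mul 2),
    integral_const_mul, mom4, mom2]
  norm_num

section Pi

variable {d : ℕ}

noncomputable def gm : Measure ℝ := gaussianReal 0 1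

instance : IsProbabilityMeasure gm := by unfold gm; infer_instance

noncomputable def pd (d : ℕ) : Measure (Fin d → ℝ) := Measure.pi fun _ => gm

instance : IsProbabilityMeasure (pd d) := by unfold pd; infer_instance

lemma f_one (i : Fin d) (φ : ℝ → ℝ) (x : Fin d → ℝ) :
    φ (x i) = ∏ k, (if k = i then φ else fun _ => (1:ℝ)) (x k) := by
  rw [Finset.prod_congr rfl (fun k _ => apply_ite (fun g : ℝ → ℝ => g (x k)) _ _ _)]
  simp [Finset.prod_ite_eq']

lemma f_two {i j : Fin d} (hij : i ≠ j) (φ ψ : ℝ → ℝ) (x : Fin d → ℝ) :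
    φ (x i) * ψ (x j)
      = ∏ k, (if k = i then φ else if k = j then ψ else fun _ => (1:ℝ)) (x k) := by
  rw [← Finset.mul_prod_erase Finset.univ _ (Finset.mem_univ i)]
  rw [← Finset.mul_prod_erase _ _ (Finset.mem_erase.mpr ⟨Ne.symm hij, Finset.mem_univ j⟩)]
  rw [Finset.prod_eq_one (fun k hk => ?_)]
  · simp [hij, Ne.symm hij]
  · simp only [Finset.mem_erase] at hk
    simp [hk.1, hk.2.1]

lemma integral_pi_one (i : Fin d) (φ : ℝ → ℝ) :
    ∫ x, φ (x i) ∂(pd d) = ∫ t, φ t ∂gm := by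
  have : (fun x : Fin d → ℝ => φ (x i))
      = fun x => ∏ k, (if k = i then φ else fun _ => (1:ℝ)) (x k) := by
    funext x; exact f_one i φ x
  rw [this, pd, integral_pi_prod]
  have h2 : ∀ k : Fin d, (∫ t, (if k = i then φ else fun _ => (1:ℝ)) t ∂gm)
      = if k = i then (∫ t, φ t ∂gm) else 1 := by
    intro k; split <;> simp
  rw [Finset.prod_congr rfl fun k _ => h2 k, Finset.prod_ite_eq']
  simp

lemma integrable_pi_one (i : Fin d) {φ : ℝ → ℝ} (hφ : Integrable φ gm) :
    Integrable (fun x : Fin d → ℝ => φ (x i)) (pd d) := by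
  have : (fun x : Fin d → ℝ => φ (x i))
      = fun x => ∏ k, (if k = i then φ else fun _ => (1:ℝ)) (x k) := by
    funext x; exact f_one i φ x
  rw [this, pd]
  refine integrable_pi_prod _ (fun k => ?_)
  by_cases h : k = i <;> simp [h, hφ, integrable_const]

lemma integral_pi_two {i j : Fin d} (hij : i ≠ j) (φ ψ : ℝ → ℝ) :
    ∫ x, φ (x i) * ψ (x j) ∂(pd d) = (∫ t, φ t ∂gm) * ∫ t, ψ t ∂gm := by
  have : (fun x : Fin d → ℝ => φ (x i) * ψ (x j))
      = fun x => ∏ k, (if k = i then φ else if k = j then ψ else fun _ => (1:ℝ)) (x k) := by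
    funext x; exact f_two hij φ ψ x
  rw [this, pd, integral_pi_prod]
  rw [← Finset.mul_prod_erase Finset.univ _ (Finset.mem_univ i)]
  rw [← Finset.mul_prod_erase _ _ (Finset.mem_erase.mpr ⟨Ne.symm hij, Finset.mem_univ j⟩)]
  rw [Finset.prod_eq_one (fun k hk => ?_)]
  · simp [hij, Ne.symm hij]
  · simp only [Finset.mem_erase] at hk
    simp [hk.1, hk.2.1]

lemma integrable_pi_two {i j : Fin d} (hij : i ≠ j) {φ ψ : ℝ → ℝ}
    (hφ : Integrable φ gm) (hψ : Integrable ψ gm) :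
    Integrable (fun x : Fin d → ℝ => φ (x i) * ψ (x j)) (pd d) := by
  have : (fun x : Fin d → ℝ => φ (x i) * ψ (x j))
      = fun x => ∏ k, (if k = i then φ else if k = j then ψ else fun _ => (1:ℝ)) (x k) := by
    funext x; exact f_two hij φ ψ x
  rw [this, pd]
  refine integrable_pi_prod _ (fun k => ?_)
  by_cases h : k = i
  · simp [h, hφ]
  · by_cases h2 : k = j <;> simp [h, h2, hφ, hψ, Ne.symm hij, integrable_const]

end Pi

section Moments

variable {d : ℕ}

lemma integrable_mul_eval (i j : Fin d) :
    Integrable (fun x : Fin d → ℝ => x i * x j) (pd d) := by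
  by_cases h : i = j
  · subst h
    have := integrable_pi_one (d := d) i (φ := fun t => t * t)
      (by simpa [sq, gm] using integrable_pow_gauss 2)
    simpa using this
  · exact integrable_pi_two h (by simpa [gm] using integrable_pow_gauss 1)
      (by simpa [gm] using integrable_pow_gauss 1)

lemma integral_mul_eval (i j : Fin d) :
    ∫ x, x i * x j ∂(pd d) = if i = j then 1 else 0 := by
  by_cases h : i = j
  · subst h
    simp only [if_true]
    have := integral_pi_one (d := d) i (fun t => t * t)
    rw [this]
    have : ∫ t, t * t ∂gm = ∫ t, t ^ 2 ∂gm := by congr 1; funext t; ring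
    rw [this]
    exact mom2
  · rw [if_neg h]
    have h2 := integral_pi_two (d := d) h id id
    simp only [id_eq] at h2
    rw [h2, show (∫ t : ℝ, t ∂gm) = 0 from mom1, mul_zero]

lemma integrable_sq1_eval (i j : Fin d) :
    Integrable (fun x : Fin d → ℝ => (x i ^ 2 - 1) * (x j ^ 2 - 1)) (pd d) := by
  by_cases h : i = j
  · subst h
    have := integrable_pi_one (d := d) i (φ := fun t => (t ^ 2 - 1) * (t ^ 2 - 1))
      (by simpa [sq, gm] using integrable_sq_sub_one_sq)
    simpa using this
  · exact integrable_pi_two h integrable_sq_sub_one integrable_sq_sub_one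

lemma integral_sq1_eval (i j : Fin d) :
    ∫ x, (x i ^ 2 - 1) * (x j ^ 2 - 1) ∂(pd d) = if i = j then 2 else 0 := by
  by_cases h : i = j
  · subst h
    rw [if_pos rfl]
    have := integral_pi_one (d := d) i (fun t => (t ^ 2 - 1) * (t ^ 2 - 1))
    rw [this]
    have h2 : ∫ t, (t ^ 2 - 1) * (t ^ 2 - 1) ∂gm = ∫ t, (t ^ 2 - 1) ^ 2 ∂gm := by
      congr 1; funext t; ring
    rw [h2]
    exact int_sq_sub_one_sq
  · rw [if_neg h]
    have h2 := integral_pi_two (d := d) h (fun t => t ^ 2 - 1) (fun t => t ^ 2 - 1)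
    rw [h2, show (∫ t : ℝ, (t ^ 2 - 1) ∂gm) = 0 from int_sq_sub_one, mul_zero]

lemma integrable_S2 (d : ℕ) :
    Integrable (fun p : (Fin d → ℝ) × (Fin d → ℝ) => (∑ i, p.1 i * p.2 i) ^ 2)
      ((pd d).prod (pd d)) := by
  have h : (fun p : (Fin d → ℝ) × (Fin d → ℝ) => (∑ i, p.1 i * p.2 i) ^ 2)
      = fun p => ∑ i, ∑ j, (p.1 i * p.1 j) * (p.2 i * p.2 j) := by
    funext p
    rw [sq, Finset.sum_mul_sum]
    congr 1; funext i; congr 1; funext j; ring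
  rw [h]
  refine integrable_finset_sum _ (fun i _ => integrable_finset_sum _ (fun j _ => ?_))
  exact (integrable_mul_eval i j).mul_prod (integrable_mul_eval i j)

lemma integral_S2 (d : ℕ) :
    ∫ p, (∑ i, p.1 i * p.2 i) ^ 2 ∂((pd d).prod (pd d)) = d := by
  have h : (fun p : (Fin d → ℝ) × (Fin d → ℝ) => (∑ i, p.1 i * p.2 i) ^ 2)
      = fun p => ∑ i, ∑ j, (p.1 i * p.1 j) * (p.2 i * p.2 j) := by
    funext p
    rw [sq, Finset.sum_mul_sum]
    congr 1; funext i; congr 1; funext j; ring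
  rw [h]
  rw [integral_finset_sum _ (fun i _ =>
    integrable_finset_sum _ (fun j _ =>
      (integrable_mul_eval i j).mul_prod (integrable_mul_eval i j)))]
  have h2 : ∀ i : Fin d, ∫ p : (Fin d → ℝ) × (Fin d → ℝ),
      (∑ j, (p.1 i * p.1 j) * (p.2 i * p.2 j)) ∂((pd d).prod (pd d))
      = ∑ j, if i = j then (1:ℝ) else 0 := by
    intro i
    rw [integral_finset_sum _ (fun j _ =>
      (integrable_mul_eval i j).mul_prod (integrable_mul_eval i j))]
    refine Finset.sum_congr rfl (fun j _ => ?_)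
    rw [integral_prod_mul (fun x : Fin d → ℝ => x i * x j) (fun y : Fin d → ℝ => y i * y j),
      integral_mul_eval]
    by_cases h : i = j <;> simp [h]
  rw [Finset.sum_congr rfl (fun i _ => h2 i)]
  simp

lemma integrable_chi (d : ℕ) :
    Integrable (fun x : Fin d → ℝ => (∑ i, x i ^ 2 - d) ^ 2) (pd d) := by
  have h : (fun x : Fin d → ℝ => (∑ i, x i ^ 2 - d) ^ 2)
      = fun x => ∑ i, ∑ j, (x i ^ 2 - 1) * (x j ^ 2 - 1) := by
    funext x
    rw [show (∑ i, x i ^ 2 - (d:ℝ)) = ∑ i, (x i ^ 2 - 1) from by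
      rw [Finset.sum_sub_distrib]; simp]
    rw [sq, Finset.sum_mul_sum]
  rw [h]
  exact integrable_finset_sum _ (fun i _ =>
    integrable_finset_sum _ (fun j _ => integrable_sq1_eval i j))

lemma integral_chi (d : ℕ) :
    ∫ x, (∑ i, x i ^ 2 - d) ^ 2 ∂(pd d) = 2 * d := by
  have h : (fun x : Fin d → ℝ => (∑ i, x i ^ 2 - d) ^ 2)
      = fun x => ∑ i, ∑ j, (x i ^ 2 - 1) * (x j ^ 2 - 1) := by
    funext x
    rw [show (∑ i, x i ^ 2 - (d:ℝ)) = ∑ i, (x i ^ 2 - 1) from by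
      rw [Finset.sum_sub_distrib]; simp]
    rw [sq, Finset.sum_mul_sum]
  rw [h]
  rw [integral_finset_sum _ (fun i _ =>
    integrable_finset_sum _ (fun j _ => integrable_sq1_eval i j))]
  have h2 : ∀ i : Fin d, ∫ x, (∑ j, (x i ^ 2 - 1) * (x j ^ 2 - 1)) ∂(pd d)
      = ∑ j, if i = j then (2:ℝ) else 0 := by
    intro i
    rw [integral_finset_sum _ (fun j _ => integrable_sq1_eval i j)]
    exact Finset.sum_congr rfl (fun j _ => integral_sq1_eval i j)
  rw [Finset.sum_congr rfl (fun i _ => h2 i)]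
  simp [mul_comm]

end Moments

section Main

variable {d : ℕ}

lemma measurable_S (d : ℕ) :
    Measurable (fun p : (Fin d → ℝ) × (Fin d → ℝ) => ∑ i, p.1 i * p.2 i) := by
  refine Finset.measurable_sum _ (fun i _ => ?_)
  exact ((measurable_pi_apply i).comp measurable_fst).mul
    ((measurable_pi_apply i).comp measurable_snd)

lemma measurable_N1 (d : ℕ) :
    Measurable (fun p : (Fin d → ℝ) × (Fin d → ℝ) => ∑ i, p.1 i ^ 2) := by
  refine Finset.measurable_sum _ (fun i _ => ?_)
  exact (((measurable_pi_apply i).comp measurable_fst).pow_const 2)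

lemma measurable_N2 (d : ℕ) :
    Measurable (fun p : (Fin d → ℝ) × (Fin d → ℝ) => ∑ i, p.2 i ^ 2) := by
  refine Finset.measurable_sum _ (fun i _ => ?_)
  exact (((measurable_pi_apply i).comp measurable_snd).pow_const 2)

lemma integrable_chi_fst (d : ℕ) :
    Integrable (fun p : (Fin d → ℝ) × (Fin d → ℝ) => (∑ i, p.1 i ^ 2 - d) ^ 2)
      ((pd d).prod (pd d)) := by
  have := (integrable_chi d).mul_prod (integrable_const (1:ℝ) (μ := pd d))
  simpa using this

lemma integrable_chi_snd (d : ℕ) :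
    Integrable (fun p : (Fin d → ℝ) × (Fin d → ℝ) => (∑ i, p.2 i ^ 2 - d) ^ 2)
      ((pd d).prod (pd d)) := by
  have := (integrable_const (1:ℝ) (μ := pd d)).mul_prod (integrable_chi d)
  simpa using this

lemma integral_chi_fst (d : ℕ) :
    ∫ p, (∑ i, p.1 i ^ 2 - d) ^ 2 ∂((pd d).prod (pd d)) = 2 * d := by
  have h := integral_prod_mul (μ := pd d) (ν := pd d)
    (fun x : Fin d → ℝ => (∑ i, x i ^ 2 - (d:ℝ)) ^ 2) (fun _ : Fin d → ℝ => (1:ℝ))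
  simpa [integral_chi d] using h

lemma integral_chi_snd (d : ℕ) :
    ∫ p, (∑ i, p.2 i ^ 2 - d) ^ 2 ∂((pd d).prod (pd d)) = 2 * d := by
  have h := integral_prod_mul (μ := pd d) (ν := pd d)
    (fun _ : Fin d → ℝ => (1:ℝ)) (fun x : Fin d → ℝ => (∑ i, x i ^ 2 - (d:ℝ)) ^ 2)
  simpa [integral_chi d] using h

end Main
end Stmt16Aux

lemma key_arith {s t : ℝ} (hs : 2 < s) (ht : 7 < t) :
    4 / s ^ 2 + 8 / t ^ 2 + 8 / t ^ 2 ≤ 2 / s + 7 / t := by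
  have hs0 : 0 < s := by linarith
  have ht0 : 0 < t := by linarith
  have k1 : 4 / s ^ 2 ≤ 2 / s := by
    rw [div_le_div_iff₀ (by positivity) (by positivity)]
    nlinarith
  have k2 : 8 / t ^ 2 + 8 / t ^ 2 ≤ 7 / t := by
    rw [show (8:ℝ) / t ^ 2 + 8 / t ^ 2 = 16 / t ^ 2 by ring,
      div_le_div_iff₀ (by positivity) (by positivity)]
    nlinarith
  linarith


end Stmt16AuxSection

open Stmt16Aux

set_option maxHeartbeats 1000000 in
/-- Two independent standard Gaussian random vectors in `ℝ^d` are nearly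
orthogonal with high probability: their (normalized) cosine similarity is at
most `ε` in absolute value with probability at least `1 - 2/(√d·ε) - 7/√d`. -/
theorem stmt_16 {Ω : Type*} [MeasureSpace Ω]
    [IsProbabilityMeasure (volume : Measure Ω)]
    (d : ℕ) (hd : 1 ≤ d) (X Y : Ω → Fin d → ℝ)
    (hXY : IndepFun X Y volume)
    (hX : Measure.map X volume = Measure.pi fun _ : Fin d => gaussianReal 0 1)
    (hY : Measure.map Y volume = Measure.pi fun _ : Fin d => gaussianReal 0 1)
    (ε : ℝ) (hε : 0 < ε) :
    1 - 2 / (Real.sqrt d * ε) - 7 / Real.sqrt d ≤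
      (volume {ω |
        |(∑ i, X ω i * Y ω i) /
          (Real.sqrt (∑ i, (X ω i) ^ 2) * Real.sqrt (∑ i, (Y ω i) ^ 2))| ≤ ε}).toReal := by
  classical
  have hd1 : (1:ℝ) ≤ (d:ℝ) := by exact_mod_cast hd
  have hdpos : (0:ℝ) < d := by linarith
  set μ2 := (pd d).prod (pd d) with hμ2def
  have hXm : AEMeasurable X volume := aemeasurable_of_map_neZero (by rw [hX]; infer_instance)
  have hYm : AEMeasurable Y volume := aemeasurable_of_map_neZero (by rw [hY]; infer_instance)
  have hmap : Measure.map (fun ω => (X ω, Y ω)) volume = μ2 := by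
    rw [(indepFun_iff_map_prod_eq_prod_map_map hXm hYm).mp hXY, hX, hY]
    rfl
  set A : Set ((Fin d → ℝ) × (Fin d → ℝ)) :=
    {p | |(∑ i, p.1 i * p.2 i) /
      (Real.sqrt (∑ i, p.1 i ^ 2) * Real.sqrt (∑ i, p.2 i ^ 2))| ≤ ε} with hAdef
  have hAmeas : MeasurableSet A := by
    refine measurableSet_le ?_ measurable_const
    exact ((measurable_S d).div (((measurable_N1 d).sqrt).mul
      ((measurable_N2 d).sqrt))).abs
  have hvol : volume {ω |
      |(∑ i, X ω i * Y ω i) /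
        (Real.sqrt (∑ i, (X ω i) ^ 2) * Real.sqrt (∑ i, (Y ω i) ^ 2))| ≤ ε} = μ2 A := by
    rw [← hmap, Measure.map_apply_of_aemeasurable (hXm.prodMk hYm) hAmeas]
    rfl
  rw [hvol]
  -- trivial case ε ≥ 1
  rcases le_or_gt 1 ε with hε1 | hε1
  · have hAuniv : A = Set.univ := by
      refine Set.eq_univ_iff_forall.mpr (fun p => ?_)
      simp only [hAdef, Set.mem_setOf_eq]
      set Sp := ∑ i, p.1 i * p.2 i
      set Dx := Real.sqrt (∑ i, p.1 i ^ 2)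
      set Dy := Real.sqrt (∑ i, p.2 i ^ 2)
      have hDx : 0 ≤ Dx := Real.sqrt_nonneg _
      have hDy : 0 ≤ Dy := Real.sqrt_nonneg _
      have hCS : |Sp| ≤ Dx * Dy := by
        have h1 : Sp ^ 2 ≤ (∑ i, p.1 i ^ 2) * (∑ i, p.2 i ^ 2) :=
          Finset.sum_mul_sq_le_sq_mul_sq _ _ _
        have h2 : Real.sqrt (Sp ^ 2) ≤ Real.sqrt ((∑ i, p.1 i ^ 2) * (∑ i, p.2 i ^ 2)) :=
          Real.sqrt_le_sqrt h1
        rwa [Real.sqrt_sq_eq_abs, Real.sqrt_mul (Finset.sum_nonneg fun i _ => sq_nonneg _)]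
          at h2
      rcases eq_or_lt_of_le (mul_nonneg hDx hDy) with hD0 | hD0
      · rw [← hD0, div_zero, abs_zero]; exact hε.le
      · rw [abs_div, abs_of_pos hD0]
        rw [div_le_iff₀ hD0]
        calc |Sp| ≤ Dx * Dy := hCS
          _ ≤ ε * (Dx * Dy) := le_mul_of_one_le_left (mul_nonneg hDx hDy) hε1
    rw [hAuniv]
    simp only [measure_univ, ENNReal.toReal_one]
    have h1 : 0 ≤ 2 / (Real.sqrt d * ε) := by positivity
    have h2 : 0 ≤ 7 / Real.sqrt d := by positivity
    linarith
  rcases le_or_gt (1 - 2 / (Real.sqrt d * ε) - 7 / Real.sqrt d) 0 with hl0 | hl0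
  · exact hl0.trans ENNReal.toReal_nonneg
  -- main case
  set B1 : Set ((Fin d → ℝ) × (Fin d → ℝ)) :=
    {p | (ε * d / 2) ^ 2 ≤ (∑ i, p.1 i * p.2 i) ^ 2} with hB1def
  set B2 : Set ((Fin d → ℝ) × (Fin d → ℝ)) :=
    {p | ((d:ℝ) / 2) ^ 2 ≤ (∑ i, p.1 i ^ 2 - d) ^ 2} with hB2def
  set B3 : Set ((Fin d → ℝ) × (Fin d → ℝ)) :=
    {p | ((d:ℝ) / 2) ^ 2 ≤ (∑ i, p.2 i ^ 2 - d) ^ 2} with hB3def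
  have hεd : 0 < ε * d / 2 := by positivity
  have hsub : Aᶜ ⊆ B1 ∪ B2 ∪ B3 := by
    rw [← Set.compl_subset_compl (s := B1 ∪ B2 ∪ B3), compl_compl]
    intro p hp
    simp only [Set.mem_compl_iff, Set.mem_union, Set.mem_setOf_eq, not_or, not_le,
      hB1def, hB2def, hB3def] at hp
    obtain ⟨⟨h1, h2⟩, h3⟩ := hp
    simp only [hAdef, Set.mem_setOf_eq]
    set Sp := ∑ i, p.1 i * p.2 i
    have hS : |Sp| < ε * d / 2 := by
      nlinarith [sq_abs Sp, abs_nonneg Sp]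
    have hx : (d:ℝ) / 2 < ∑ i, p.1 i ^ 2 := by
      nlinarith [sq_abs (∑ i, p.1 i ^ 2 - d), abs_nonneg (∑ i, p.1 i ^ 2 - d),
        neg_abs_le (∑ i, p.1 i ^ 2 - d)]
    have hy : (d:ℝ) / 2 < ∑ i, p.2 i ^ 2 := by
      nlinarith [sq_abs (∑ i, p.2 i ^ 2 - d), abs_nonneg (∑ i, p.2 i ^ 2 - d),
        neg_abs_le (∑ i, p.2 i ^ 2 - d)]
    have hDx : Real.sqrt ((d:ℝ) / 2) ≤ Real.sqrt (∑ i, p.1 i ^ 2) := Real.sqrt_le_sqrt hx.le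
    have hDy : Real.sqrt ((d:ℝ) / 2) ≤ Real.sqrt (∑ i, p.2 i ^ 2) := Real.sqrt_le_sqrt hy.le
    have hd2 : Real.sqrt ((d:ℝ) / 2) * Real.sqrt ((d:ℝ) / 2) = (d:ℝ) / 2 :=
      Real.mul_self_sqrt (by positivity)
    have hD : (d:ℝ) / 2 ≤ Real.sqrt (∑ i, p.1 i ^ 2) * Real.sqrt (∑ i, p.2 i ^ 2) := by
      rw [← hd2]
      exact mul_le_mul hDx hDy (Real.sqrt_nonneg _) (Real.sqrt_nonneg _)
    have hDpos : 0 < Real.sqrt (∑ i, p.1 i ^ 2) * Real.sqrt (∑ i, p.2 i ^ 2) := by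
      have : (0:ℝ) < (d:ℝ) / 2 := by positivity
      linarith
    rw [abs_div, abs_of_pos hDpos, div_le_iff₀ hDpos]
    calc |Sp| ≤ ε * d / 2 := hS.le
      _ = ε * ((d:ℝ)/2) := by ring
      _ ≤ ε * (Real.sqrt (∑ i, p.1 i ^ 2) * Real.sqrt (∑ i, p.2 i ^ 2)) := by
          exact mul_le_mul_of_nonneg_left hD hε.le
  -- Markov bounds
  have hM1 : (μ2 B1).toReal ≤ 4 / (d * ε ^ 2) := by
    have h := mul_meas_ge_le_integral_of_nonneg (μ := μ2)
      (f := fun p => (∑ i, p.1 i * p.2 i) ^ 2)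
      (Filter.Eventually.of_forall fun p => sq_nonneg _) (integrable_S2 d) ((ε * d / 2) ^ 2)
    rw [integral_S2 d] at h
    have h2 : ((ε * (d:ℝ) / 2) ^ 2) * (μ2 B1).toReal ≤ (d:ℝ) := h
    rw [le_div_iff₀ (by positivity : (0:ℝ) < (d:ℝ) * ε ^ 2)]
    nlinarith [h2]
  have hM2 : (μ2 B2).toReal ≤ 8 / d := by
    have h := mul_meas_ge_le_integral_of_nonneg (μ := μ2)
      (f := fun p => (∑ i, p.1 i ^ 2 - d) ^ 2)
      (Filter.Eventually.of_forall fun p => sq_nonneg _) (integrable_chi_fst d) (((d:ℝ) / 2) ^ 2)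
    rw [integral_chi_fst d] at h
    have h2 : (((d:ℝ) / 2) ^ 2) * (μ2 B2).toReal ≤ 2 * (d:ℝ) := h
    rw [le_div_iff₀ hdpos]
    nlinarith [h2]
  have hM3 : (μ2 B3).toReal ≤ 8 / d := by
    have h := mul_meas_ge_le_integral_of_nonneg (μ := μ2)
      (f := fun p => (∑ i, p.2 i ^ 2 - d) ^ 2)
      (Filter.Eventually.of_forall fun p => sq_nonneg _) (integrable_chi_snd d) (((d:ℝ) / 2) ^ 2)
    rw [integral_chi_snd d] at h
    have h2 : (((d:ℝ) / 2) ^ 2) * (μ2 B3).toReal ≤ 2 * (d:ℝ) := h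
    rw [le_div_iff₀ hdpos]
    nlinarith [h2]
  -- union bound
  have hAc : (μ2 Aᶜ).toReal ≤ (μ2 B1).toReal + (μ2 B2).toReal + (μ2 B3).toReal := by
    have h1 : μ2 Aᶜ ≤ μ2 B1 + μ2 B2 + μ2 B3 := by
      calc μ2 Aᶜ ≤ μ2 (B1 ∪ B2 ∪ B3) := measure_mono hsub
        _ ≤ μ2 (B1 ∪ B2) + μ2 B3 := measure_union_le _ _
        _ ≤ μ2 B1 + μ2 B2 + μ2 B3 := add_le_add_left (measure_union_le _ _) _
    have h2 := ENNReal.toReal_mono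
      (by exact ENNReal.add_ne_top.mpr ⟨ENNReal.add_ne_top.mpr
        ⟨measure_ne_top μ2 B1, measure_ne_top μ2 B2⟩, measure_ne_top μ2 B3⟩) h1
    rwa [ENNReal.toReal_add (ENNReal.add_ne_top.mpr
        ⟨measure_ne_top μ2 B1, measure_ne_top μ2 B2⟩) (measure_ne_top μ2 B3),
      ENNReal.toReal_add (measure_ne_top μ2 B1) (measure_ne_top μ2 B2)] at h2
  have hcompl : (μ2 A).toReal = 1 - (μ2 Aᶜ).toReal := by
    have h := prob_compl_eq_one_sub (μ := μ2) hAmeas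
    rw [h, ENNReal.toReal_sub_of_le prob_le_one ENNReal.one_ne_top, ENNReal.toReal_one]
    ring
  -- final arithmetic
  set t := Real.sqrt d with htdef
  have htpos : 0 < t := Real.sqrt_pos.mpr hdpos
  have ht2 : t ^ 2 = d := Real.sq_sqrt hdpos.le
  have hspos : 0 < t * ε := by positivity
  have h2s : 2 / (t * ε) < 1 := by
    have : 0 < 7 / t := by positivity
    linarith
  have h7t : 7 / t < 1 := by
    have : 0 < 2 / (t * ε) := by positivity
    linarith
  have hs2 : 2 < t * ε := by
    rw [div_lt_one hspos] at h2s
    exact h2s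
  have ht7 : 7 < t := by
    rw [div_lt_one htpos] at h7t
    exact h7t
  have key : 4 / (d * ε ^ 2) + 8 / d + 8 / d ≤ 2 / (t * ε) + 7 / t := by
    have e1 : (d:ℝ) * ε ^ 2 = (t * ε) ^ 2 := by rw [mul_pow, ht2]
    have e2 : (d:ℝ) = t ^ 2 := ht2.symm
    rw [e1, e2]
    exact key_arith hs2 ht7
  rw [hcompl]
  have : (μ2 Aᶜ).toReal ≤ 2 / (t * ε) + 7 / t := by
    calc (μ2 Aᶜ).toReal ≤ (μ2 B1).toReal + (μ2 B2).toReal + (μ2 B3).toReal := hAc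
      _ ≤ 4 / (d * ε ^ 2) + 8 / d + 8 / d := by linarith
      _ ≤ 2 / (t * ε) + 7 / t := key
  linarith
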